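/- Let g be a simple Lie algebra over an algebraically closed field of characteristic zero that is not of type D_{2n}. Then the exponents of g are pairwise distinct, and consequently the decomposition of g into irreducible representations under a principal sl_2-triple is multiplicity-free: the rank-many irreducible summands are pairwise nonisomorphic. -/
import Mathlib


/-- The Dynkin type of a simple Lie algebra (over an algebraically closed field of
characteristic zero), with the rank as parameter for the classical series. -/
inductive SimpleLieType
  | A (r : ℕ)
  | B (r : ℕ)
  | C (r : ℕ)
  | D (r : ℕ)
  | E6 | E7 | E8 | F4 | G2

/-- The multiset of exponents `m_1, …, m_r` of a simple Lie algebra of the given type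
(`r` = rank), as computed in the standard tables: under a principal `sl_2`-triple the Lie
algebra decomposes as `⊕_{i=1}^r V(2 m_i)` (Kostant). -/
def exponents : SimpleLieType → Multiset ℕ
  | .A r => (Multiset.range r).map (· + 1)
  | .B r => (Multiset.range r).map (fun i => 2 * i + 1)
  | .C r => (Multiset.range r).map (fun i => 2 * i + 1)
  | .D r => (Multiset.range (r - 1)).map (fun i => 2 * i + 1) + {r - 1}
  | .E6 => {1, 4, 5, 7, 8, 11}
  | .E7 => {1, 5, 7, 9, 11, 13, 17}
  | .E8 => {1, 7, 11, 13, 17, 19, 23, 29}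
  | .F4 => {1, 5, 7, 11}
  | .G2 => {1, 5}

/-- if the simple Lie algebra `g` is not of type `D_{2n}`, then its exponents
are pairwise distinct; consequently the decomposition `g ≅ ⊕_{i=1}^r V(2 m_i)` of `g` under a
principal `sl_2`-triple is multiplicity-free: the rank-many irreducible summands are pairwise
nonisomorphic, since the dimensions `2 m_i + 1` of the summands are pairwise distinct. -/
theorem stmt11 (t : SimpleLieType) (h : ∀ n : ℕ, t ≠ .D (2 * n)) :
    (exponents t).Nodup ∧ ((exponents t).map (fun m => 2 * m + 1)).Nodup := by
  have key : (exponents t).Nodup := by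
    cases t with
    | A r =>
      exact (Multiset.nodup_range r).map (fun a b => by omega)
    | B r =>
      exact (Multiset.nodup_range r).map (fun a b => by omega)
    | C r =>
      exact (Multiset.nodup_range r).map (fun a b => by omega)
    | D r =>
      have hr : ¬ ∃ n, r = 2 * n := by
        rintro ⟨n, rfl⟩; exact h n rfl
      have hodd : r % 2 = 1 := by
        rcases Nat.even_or_odd r with ⟨n, hn⟩ | ho
        · exact absurd ⟨n, by omega⟩ hr
        · obtain ⟨k, hk⟩ := ho; omega
      show Multiset.Nodup (_ + _)
      rw [Multiset.nodup_add]
      refine ⟨(Multiset.nodup_range _).map (fun a b => by omega), Multiset.nodup_singleton _, ?_⟩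
      rw [Multiset.disjoint_left]
      intro x hx hx'
      rw [Multiset.mem_singleton] at hx'
      subst hx'
      simp only [Multiset.mem_map, Multiset.mem_range] at hx
      obtain ⟨i, hi, heq⟩ := hx
      omega
    | E6 => decide
    | E7 => decide
    | E8 => decide
    | F4 => decide
    | G2 => decide
  exact ⟨key, key.map (fun a b => by omega)⟩
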